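/- User-wise AMSE transfer from uplink to downlink: in the multiuser MIMO setup with the matrix X as defined, suppose β ∈ ℝ^K satisfies the linear system X·β = σ²·(tr(Q_1),…,tr(Q_K))ᵀ and β_k > 0 for every k, and define the downlink power allocations P_k = β_k·α_k²·Q_k⁻¹. Then every user achieves the same AMSE in both channels: ξ̄_k^{DL} = ξ̄_k^{UL} for all k ∈ {1,…,K}. -/

import Mathlib

open Matrix BigOperators ComplexOrder

noncomputable section

/-- A diagonal complex matrix built from a real vector. -/
def diagC {n : ℕ} (v : Fin n → ℝ) : Matrix (Fin n) (Fin n) ℂ :=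
  Matrix.diagonal (fun i => (v i : ℂ))

/-- The multiuser MIMO setup: `K` users, `N` BS antennas, per-user antenna counts `M k`,
symbol counts `S k`, estimated channels `H k`, transmit/receive filters `G k`, `U k` with
unit-norm columns, invertible real diagonal scaling factors `α k`, Hermitian positive
semidefinite antenna correlation matrices `Rb k`, `Rm k`, channel estimation error variances
`σe2 k ≥ 0` and noise variance `σ2 > 0`. -/
structure MIMOSetup (K N : ℕ) where
  M : Fin K → ℕ
  S : Fin K → ℕ
  hM : ∀ k, 0 < M k
  hS : ∀ k, 0 < S k
  H : ∀ k : Fin K, Matrix (Fin N) (Fin (M k)) ℂ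
  G : ∀ k : Fin K, Matrix (Fin N) (Fin (S k)) ℂ
  U : ∀ k : Fin K, Matrix (Fin (M k)) (Fin (S k)) ℂ
  α : ∀ k : Fin K, Fin (S k) → ℝ
  Rb : Fin K → Matrix (Fin N) (Fin N) ℂ
  Rm : ∀ k : Fin K, Matrix (Fin (M k)) (Fin (M k)) ℂ
  σe2 : Fin K → ℝ
  σ2 : ℝ
  hG : ∀ k i, ((G k)ᴴ * G k) i i = 1
  hU : ∀ k i, ((U k)ᴴ * U k) i i = 1
  hα : ∀ k i, α k i ≠ 0
  hRb : ∀ k, (Rb k).PosSemidef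
  hRm : ∀ k, (Rm k).PosSemidef
  hσe2 : ∀ k, 0 ≤ σe2 k
  hσ2 : 0 < σ2

namespace MIMOSetup

variable {K N : ℕ} (s : MIMOSetup K N)

/-- `α_k` as a diagonal complex matrix. -/
def αM (k : Fin K) : Matrix (Fin (s.S k)) (Fin (s.S k)) ℂ := diagC (s.α k)

/-- `Γ_k^{DL}` for downlink power allocations `P`. -/
def GammaDL (P : ∀ k : Fin K, Matrix (Fin (s.S k)) (Fin (s.S k)) ℂ) (k : Fin K) :
    Matrix (Fin (s.M k)) (Fin (s.M k)) ℂ :=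
  (s.H k)ᴴ * (∑ i, s.G i * P i * (s.G i)ᴴ) * s.H k
    + ((s.σe2 k : ℂ) * (s.Rb k * ∑ i, s.G i * P i * (s.G i)ᴴ).trace) • s.Rm k
    + (s.σ2 : ℂ) • 1

/-- `Γ_c` for uplink power allocations `Q`. -/
def GammaC (Q : ∀ k : Fin K, Matrix (Fin (s.S k)) (Fin (s.S k)) ℂ) :
    Matrix (Fin N) (Fin N) ℂ :=
  (∑ i, (s.H i * s.U i * Q i * (s.U i)ᴴ * (s.H i)ᴴ
    + ((s.σe2 i : ℂ) * (s.Rm i * (s.U i * Q i * (s.U i)ᴴ)).trace) • s.Rb i))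
    + (s.σ2 : ℂ) • 1

/-- The `k`-th user downlink AMSE `ξ̄_k^{DL}`. -/
def xiDLk (P : ∀ k : Fin K, Matrix (Fin (s.S k)) (Fin (s.S k)) ℂ) (k : Fin K) : ℝ :=
  (s.S k : ℝ) + (((P k)⁻¹ * (s.αM k) ^ 2 * (s.U k)ᴴ * s.GammaDL P k * s.U k).trace).re
    - 2 * ((((s.G k)ᴴ * s.H k * s.U k * s.αM k).trace).re)

/-- The `k`-th user uplink AMSE `ξ̄_k^{UL}`. -/
def xiULk (Q : ∀ k : Fin K, Matrix (Fin (s.S k)) (Fin (s.S k)) ℂ) (k : Fin K) : ℝ :=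
  (s.S k : ℝ) + (((Q k)⁻¹ * (s.αM k) ^ 2 * (s.G k)ᴴ * s.GammaC Q * s.G k).trace).re
    - 2 * (((s.αM k * (s.G k)ᴴ * s.H k * s.U k).trace).re)

/-- Downlink sum AMSE `ξ̄^{DL}`. -/
def xiDL (P : ∀ k : Fin K, Matrix (Fin (s.S k)) (Fin (s.S k)) ℂ) : ℝ := ∑ k, s.xiDLk P k

/-- Uplink sum AMSE `ξ̄^{UL}`. -/
def xiUL (Q : ∀ k : Fin K, Matrix (Fin (s.S k)) (Fin (s.S k)) ℂ) : ℝ := ∑ k, s.xiULk Q k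

end MIMOSetup

namespace MIMOSetup

variable {K N : ℕ}

/-- The matrix `X` of the user-wise uplink-to-downlink AMSE transfer (eq. (12)). -/
def Xmat (s : MIMOSetup K N) (Q : ∀ k : Fin K, Fin (s.S k) → ℝ) :
    Matrix (Fin K) (Fin K) ℝ := fun k l =>
  if k = l then
    s.σ2 * (((diagC (Q k))⁻¹ * (s.αM k) ^ 2).trace).re
      + ∑ i ∈ Finset.univ.erase k,
        ((((diagC (Q k))⁻¹ * (s.αM k) ^ 2 * (s.G k)ᴴ * s.H i * s.U i * diagC (Q i)
            * (s.U i)ᴴ * (s.H i)ᴴ * s.G k).trace).re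
          + s.σe2 i * (((s.Rm i * (s.U i * diagC (Q i) * (s.U i)ᴴ)).trace).re)
            * (((s.Rb i * (s.G k * (s.αM k) ^ 2 * (diagC (Q k))⁻¹ * (s.G k)ᴴ)).trace).re))
  else
    -((((diagC (Q l))⁻¹ * (s.αM l) ^ 2 * (s.G l)ᴴ * s.H k * s.U k * diagC (Q k)
        * (s.U k)ᴴ * (s.H k)ᴴ * s.G l).trace).re
      + s.σe2 k * (((s.Rm k * (s.U k * diagC (Q k) * (s.U k)ᴴ)).trace).re)
        * (((s.Rb k * (s.G l * (s.αM l) ^ 2 * (diagC (Q l))⁻¹ * (s.G l)ᴴ)).trace).re))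

end MIMOSetup

section AMSEAux

open Matrix

lemma diagC_mul_diagC {n : ℕ} (v w : Fin n → ℝ) :
    diagC v * diagC w = diagC (fun i => v i * w i) := by
  simp [diagC, Matrix.diagonal_mul_diagonal]

lemma diagC_comm {n : ℕ} (v w : Fin n → ℝ) : diagC v * diagC w = diagC w * diagC v := by
  simp [diagC_mul_diagC, mul_comm]

lemma diagC_inv {n : ℕ} (v : Fin n → ℝ) (hv : ∀ i, v i ≠ 0) :
    (diagC v)⁻¹ = diagC (fun i => (v i)⁻¹) := by
  refine Matrix.inv_eq_left_inv ?_
  rw [diagC_mul_diagC]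
  have : (fun i => (v i)⁻¹ * v i) = fun _ => (1:ℝ) := by
    funext i; exact inv_mul_cancel₀ (hv i)
  rw [this]
  simp [diagC]

lemma diagC_conjTranspose {n : ℕ} (v : Fin n → ℝ) : (diagC v)ᴴ = diagC v := by
  simp [diagC, Matrix.diagonal_conjTranspose]

lemma smul_diagC {n : ℕ} (r : ℝ) (v : Fin n → ℝ) :
    (r : ℂ) • diagC v = diagC (fun i => r * v i) := by
  simp [diagC, ← Matrix.diagonal_smul]

lemma trace_diagC_mul_one_diag {n : ℕ} (v : Fin n → ℝ) (M : Matrix (Fin n) (Fin n) ℂ)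
    (hM : ∀ i, M i i = 1) : (diagC v * M).trace = (diagC v).trace := by
  simp [Matrix.trace, Matrix.diag, diagC, Matrix.diagonal_mul, hM]

/-- trace of a product of two Hermitian matrices is real -/
lemma trace_mul_isHermitian_re {n : ℕ} (A : Matrix (Fin n) (Fin n) ℂ)
    (B : Matrix (Fin n) (Fin n) ℂ) (hA : A.IsHermitian) (hB : B.IsHermitian) :
    ((A * B).trace : ℂ) = (((A * B).trace).re : ℂ) := by
  have h : (starRingEnd ℂ) ((A * B).trace) = (A * B).trace := by
    have := Matrix.trace_conjTranspose (A * B)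
    rw [Matrix.conjTranspose_mul, hA.eq, hB.eq, Matrix.trace_mul_comm] at this
    simpa using this.symm
  exact (Complex.conj_eq_iff_re.mp h).symm

end AMSEAux


set_option maxHeartbeats 1600000 in
/-- **User-wise AMSE transfer from uplink to downlink.** If `β ∈ ℝ^K` solves
`X·β = σ²·(tr Q_1, …, tr Q_K)ᵀ` with `β_k > 0` for every `k`, and the downlink power
allocations are `P_k = β_k • α_k² Q_k⁻¹`, then every user achieves the same AMSE in both
channels. -/
theorem userwise_AMSE_transfer_uplink_to_downlink {K N : ℕ} (hK : 0 < K) (hN : 0 < N)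
    (s : MIMOSetup K N)
    (Q : ∀ k : Fin K, Fin (s.S k) → ℝ) (hQ : ∀ k i, 0 < Q k i)
    (β : Fin K → ℝ) (hβpos : ∀ k, 0 < β k)
    (hβ : s.Xmat Q *ᵥ β = fun k => s.σ2 * ((diagC (Q k)).trace).re)
    (P : ∀ k : Fin K, Matrix (Fin (s.S k)) (Fin (s.S k)) ℂ)
    (hP : ∀ k, P k = (β k : ℂ) • ((s.αM k) ^ 2 * (diagC (Q k))⁻¹)) :
    ∀ k, s.xiDLk P k = s.xiULk (fun k => diagC (Q k)) k := by
  intro k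
  classical
  -- the merged diagonal weight vectors
  set w : ∀ i : Fin K, Fin (s.S i) → ℝ := fun i j => (s.α i j)^2 * (Q i j)⁻¹ with hwdef
  have hα2 : ∀ i : Fin K, (s.αM i)^2 = diagC (fun j => (s.α i j)^2) := by
    intro i
    rw [MIMOSetup.αM, sq, diagC_mul_diagC]
    simp [sq]
  have hQinv : ∀ i : Fin K, (diagC (Q i))⁻¹ = diagC (fun j => (Q i j)⁻¹) := by
    intro i
    exact diagC_inv _ (fun j => (hQ i j).ne')
  have hA : ∀ i : Fin K, (s.αM i)^2 * (diagC (Q i))⁻¹ = diagC (w i) := by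
    intro i
    rw [hα2 i, hQinv i, diagC_mul_diagC]
  have hA' : ∀ i : Fin K, (diagC (Q i))⁻¹ * (s.αM i)^2 = diagC (w i) := by
    intro i
    rw [hα2 i, hQinv i, diagC_mul_diagC]
    simp [hwdef, mul_comm]
  -- inverse of downlink power matrix times αM²
  have hD : (P k)⁻¹ * (s.αM k)^2 = ((β k)⁻¹ : ℂ) • diagC (Q k) := by
    have hwne : ∀ j, β k * w k j ≠ 0 := by
      intro j
      simp only [hwdef]
      exact mul_ne_zero (hβpos k).ne'
        (mul_ne_zero (pow_ne_zero 2 (s.hα k j)) (inv_ne_zero (hQ k j).ne'))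
    rw [hP k, hA k, smul_diagC, diagC_inv _ hwne, hα2 k, diagC_mul_diagC, ← Complex.ofReal_inv, smul_diagC]
    have : (fun j => (β k * w k j)⁻¹ * s.α k j ^ 2) = fun j => (β k)⁻¹ * Q k j := by
      funext j
      have hq : Q k j ≠ 0 := (hQ k j).ne'
      have ha : s.α k j ≠ 0 := s.hα k j
      have hb : β k ≠ 0 := (hβpos k).ne'
      simp only [hwdef]
      field_simp
    rw [this]
  -- canonical real scalars
  set ra : ℝ := ((diagC (w k)).trace).re with hra
  set rq : ℝ := ((diagC (Q k)).trace).re with hrq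
  set a : Fin K → ℝ := fun i =>
    ((diagC (w k) * ((s.G k)ᴴ * (s.H i * (s.U i * (diagC (Q i) * ((s.U i)ᴴ * ((s.H i)ᴴ * s.G k))))))).trace).re with hadef
  set c : Fin K → ℝ := fun l =>
    ((diagC (w l) * ((s.G l)ᴴ * (s.H k * (s.U k * (diagC (Q k) * ((s.U k)ᴴ * ((s.H k)ᴴ * s.G l))))))).trace).re with hcdef
  set tm : Fin K → ℝ := fun i => ((s.Rm i * (s.U i * (diagC (Q i) * (s.U i)ᴴ))).trace).re with htmdef
  set tb : Fin K → Fin K → ℝ := fun i l => ((s.Rb i * (s.G l * (diagC (w l) * (s.G l)ᴴ))).trace).re with htbdef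
  -- reality of the correlation traces
  have htm : ∀ i : Fin K, ((s.Rm i * (s.U i * (diagC (Q i) * (s.U i)ᴴ))).trace : ℂ) = ((tm i : ℝ) : ℂ) := by
    intro i
    refine trace_mul_isHermitian_re _ _ (s.hRm i).1 ?_
    unfold Matrix.IsHermitian
    simp only [Matrix.conjTranspose_mul, Matrix.conjTranspose_conjTranspose,
      diagC_conjTranspose, Matrix.mul_assoc]
  have htb : ∀ i l : Fin K, ((s.Rb i * (s.G l * (diagC (w l) * (s.G l)ᴴ))).trace : ℂ) = ((tb i l : ℝ) : ℂ) := by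
    intro i l
    refine trace_mul_isHermitian_re _ _ (s.hRb i).1 ?_
    unfold Matrix.IsHermitian
    simp only [Matrix.conjTranspose_mul, Matrix.conjTranspose_conjTranspose,
      diagC_conjTranspose, Matrix.mul_assoc]
  -- the linear system, row k
  have hA2 : ∀ (j : Fin K) (B : Matrix (Fin (s.S j)) (Fin N) ℂ),
      s.αM j ^ 2 * ((diagC (Q j))⁻¹ * B) = diagC (w j) * B := by
    intro j B
    rw [← Matrix.mul_assoc, hA j]
  have hA'2 : ∀ (j : Fin K) (B : Matrix (Fin (s.S j)) (Fin (s.S j)) ℂ),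
      (diagC (Q j))⁻¹ * (s.αM j ^ 2 * B) = diagC (w j) * B := by
    intro j B
    rw [← Matrix.mul_assoc, hA' j]
  have hXdiag : s.Xmat Q k k
      = s.σ2 * ra + ∑ i ∈ Finset.univ.erase k, (a i + s.σe2 i * tm i * tb i k) := by
    simp only [MIMOSetup.Xmat, if_true]
    simp only [Matrix.mul_assoc, hA'2, hA2, hA', hadef, htmdef, htbdef, hra]
  have hXoff : ∀ l, k ≠ l → s.Xmat Q k l = -(c l + s.σe2 k * tm k * tb k l) := by
    intro l hkl
    simp only [MIMOSetup.Xmat]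
    rw [if_neg hkl]
    simp only [Matrix.mul_assoc, hA'2, hA2, hcdef, htmdef, htbdef]
  have hX : β k * (s.σ2 * ra + ∑ i, (a i + s.σe2 i * tm i * tb i k))
      - ∑ l, β l * (c l + s.σe2 k * tm k * tb k l) = s.σ2 * rq := by
    have h0 := congrFun hβ k
    have hmv : (s.Xmat Q *ᵥ β) k = ∑ l, s.Xmat Q k l * β l := by
      simp [Matrix.mulVec, dotProduct]
    rw [hmv, ← Finset.sum_erase_add _ _ (Finset.mem_univ k), hXdiag] at h0
    rw [Finset.sum_congr rfl
      (fun l hl => by rw [hXoff l (Ne.symm (Finset.ne_of_mem_erase hl))])] at h0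
    rw [← hrq] at h0
    have hak : a k = c k := by rw [hadef, hcdef]
    rw [← Finset.sum_erase_add _ (fun i => a i + s.σe2 i * tm i * tb i k)
        (Finset.mem_univ k),
      ← Finset.sum_erase_add _ (fun l => β l * (c l + s.σe2 k * tm k * tb k l))
        (Finset.mem_univ k), hak]
    have hs : ∑ l ∈ Finset.univ.erase k, -(c l + s.σe2 k * tm k * tb k l) * β l
        = - ∑ l ∈ Finset.univ.erase k, β l * (c l + s.σe2 k * tm k * tb k l) := by
      rw [← Finset.sum_neg_distrib]
      exact Finset.sum_congr rfl fun l _ => by ring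
    rw [hs] at h0
    linear_combination h0
  -- uplink AMSE expansion
  have hULkey : ((diagC (Q k))⁻¹ * s.αM k ^ 2 * (s.G k)ᴴ * s.GammaC (fun i => diagC (Q i)) * s.G k).trace
      = (∑ i, ((diagC (w k) * ((s.G k)ᴴ * (s.H i * (s.U i * (diagC (Q i) * ((s.U i)ᴴ * ((s.H i)ᴴ * s.G k))))))).trace
          + ((s.σe2 i : ℂ) * (s.Rm i * (s.U i * (diagC (Q i) * (s.U i)ᴴ))).trace)
            * (s.Rb i * (s.G k * (diagC (w k) * (s.G k)ᴴ))).trace))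
        + (s.σ2 : ℂ) * (diagC (w k)).trace := by
    rw [hA' k, MIMOSetup.GammaC]
    simp only [Matrix.mul_add, Matrix.add_mul, Matrix.mul_sum, Matrix.sum_mul,
      Matrix.smul_mul, Matrix.mul_smul, Matrix.trace_add, Matrix.trace_sum, Matrix.trace_smul,
      smul_eq_mul, Matrix.mul_one, Matrix.mul_assoc]
    congr 1
    · refine Finset.sum_congr rfl fun i _ => ?_
      congr 2
      conv_lhs => rw [Matrix.trace_mul_comm]
      simp only [Matrix.mul_assoc]
      conv_lhs => rw [Matrix.trace_mul_comm]
      simp only [Matrix.mul_assoc]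
    · congr 1
      exact trace_diagC_mul_one_diag _ _ (s.hG k)
  have hUL : s.xiULk (fun i => diagC (Q i)) k
      = (s.S k : ℝ) + ((∑ i, (a i + s.σe2 i * tm i * tb i k)) + s.σ2 * ra)
        - 2 * (((s.αM k * (s.G k)ᴴ * s.H k * s.U k).trace).re) := by
    simp only [MIMOSetup.xiULk]
    rw [hULkey]
    simp only [Complex.add_re, Complex.re_sum, htm, htb, ← Complex.ofReal_mul,
      Complex.ofReal_re, Complex.re_ofReal_mul, hadef, hra]
  -- downlink AMSE expansion
  have hSg : (∑ i, s.G i * P i * (s.G i)ᴴ) = ∑ i, (β i : ℂ) • (s.G i * (diagC (w i) * (s.G i)ᴴ)) := by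
    refine Finset.sum_congr rfl fun i _ => ?_
    rw [hP i, hA i, Matrix.mul_smul, Matrix.smul_mul]
    simp only [Matrix.mul_assoc]
  have hDLkey : ((P k)⁻¹ * s.αM k ^ 2 * (s.U k)ᴴ * s.GammaDL P k * s.U k).trace
      = ((β k : ℂ))⁻¹ * ((∑ i, (β i : ℂ) * ((diagC (w i) * ((s.G i)ᴴ * (s.H k * (s.U k * (diagC (Q k) * ((s.U k)ᴴ * ((s.H k)ᴴ * s.G i))))))).trace
          + ((s.σe2 k : ℂ) * (s.Rm k * (s.U k * (diagC (Q k) * (s.U k)ᴴ))).trace) * (s.Rb k * (s.G i * (diagC (w i) * (s.G i)ᴴ))).trace))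
        + (s.σ2 : ℂ) * (diagC (Q k)).trace) := by
    rw [MIMOSetup.GammaDL, hSg, hD]
    simp only [Matrix.mul_add, Matrix.add_mul, Matrix.mul_sum, Matrix.sum_mul,
      Matrix.smul_mul, Matrix.mul_smul, Matrix.trace_add, Matrix.trace_sum, Matrix.trace_smul,
      smul_eq_mul, Matrix.mul_one, Matrix.mul_assoc]
    have hrot1 : ∀ i : Fin K,
        (diagC (Q k) * ((s.U k)ᴴ * ((s.H k)ᴴ * (s.G i * (diagC (w i) * ((s.G i)ᴴ * (s.H k * s.U k))))))).trace
        = (diagC (w i) * ((s.G i)ᴴ * (s.H k * (s.U k * (diagC (Q k) * ((s.U k)ᴴ * ((s.H k)ᴴ * s.G i))))))).trace := by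
      intro i
      conv_lhs => rw [Matrix.trace_mul_comm]
      simp only [Matrix.mul_assoc]
      conv_lhs => rw [Matrix.trace_mul_comm]
      simp only [Matrix.mul_assoc]
      conv_lhs => rw [Matrix.trace_mul_comm]
      simp only [Matrix.mul_assoc]
      conv_lhs => rw [Matrix.trace_mul_comm]
      simp only [Matrix.mul_assoc]
    have hrot2 : (diagC (Q k) * ((s.U k)ᴴ * (s.Rm k * s.U k))).trace
        = (s.Rm k * (s.U k * (diagC (Q k) * (s.U k)ᴴ))).trace := by
      conv_lhs => rw [Matrix.trace_mul_comm]
      simp only [Matrix.mul_assoc]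
      conv_lhs => rw [Matrix.trace_mul_comm]
      simp only [Matrix.mul_assoc]
    have hrot3 : (diagC (Q k) * ((s.U k)ᴴ * s.U k)).trace = (diagC (Q k)).trace :=
      trace_diagC_mul_one_diag _ _ (s.hU k)
    simp only [hrot1, hrot2, hrot3, Finset.mul_sum, Finset.sum_mul, mul_add, add_mul,
      Finset.sum_add_distrib, mul_comm, mul_left_comm, mul_assoc]
  have hDL : s.xiDLk P k
      = (s.S k : ℝ) + (β k)⁻¹ * ((∑ i, β i * (c i + s.σe2 k * tm k * tb k i)) + s.σ2 * rq)
        - 2 * (((s.αM k * (s.G k)ᴴ * s.H k * s.U k).trace).re) := by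
    have hlin : ((s.G k)ᴴ * s.H k * s.U k * s.αM k).trace
        = (s.αM k * (s.G k)ᴴ * s.H k * s.U k).trace := by
      conv_lhs => rw [Matrix.trace_mul_comm]
      simp only [Matrix.mul_assoc]
    simp only [MIMOSetup.xiDLk]
    rw [hDLkey, hlin, ← Complex.ofReal_inv]
    simp only [Complex.re_ofReal_mul, Complex.add_re, Complex.re_sum, htm, htb,
      ← Complex.ofReal_mul, Complex.ofReal_re, hcdef, hrq]
  rw [hDL, hUL]
  have hbk : β k ≠ 0 := (hβpos k).ne'
  have : (∑ l, β l * (c l + s.σe2 k * tm k * tb k l)) + s.σ2 * rq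
      = β k * (s.σ2 * ra + ∑ i, (a i + s.σe2 i * tm i * tb i k)) := by
    linear_combination -hX
  rw [this, inv_mul_cancel_left₀ hbk]
  ring
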